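/- arXiv:2104.09763 — 4 statements merged into one kernel-verified Lean document; each statement's English description precedes it below -/
import Mathlib

section
/- For b ∈ ℝ and x, y > b, the difference of free and half-line Dirichlet Green's functions equals [G_free - G_{(b,∞)}](x,y;k²) = -e^{ik(x+y-2b)}/(2ik) for Im k > 0, and computing (i/π)∫ along the positive imaginary axis, the kernel of H_free - H_{(b,∞)} at (x,y) equals -1/(π(x+y-2b)²); in particular its diagonal value at x is -1/(4π(x-b)²). -/
open MeasureTheory

/-- For `x, y > b`: (i) the difference of the free and half-line Dirichlet Green's
functions is `[G_free - G_{(b,∞)}](x,y;k²) = -e^{ik(x+y-2b)}/(2ik)` for `Im k > 0`;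
(ii) integrating along the positive imaginary axis, the kernel of
`H_free - H_{(b,∞)}` at `(x,y)` equals `-1/(π(x+y-2b)²)`, computed as
`-(2/π)∫₀^∞ k² [G_free - G_{(b,∞)}](x,y;(ik)²) dk` where the integrand at `(ik)²`
is `e^{-k(x+y-2b)}/(2k)`; (iii) on the diagonal `y = x` this is `-1/(4π(x-b)²)`. -/
theorem halfline_sqrt_laplacian_kernel_difference
    (b x y : ℝ) (hx : b < x) (hy : b < y) :
    (∀ k : ℂ, 0 < k.im →
      (-Complex.exp (Complex.I * k * |x - y|) / (2 * Complex.I * k))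
        - (-(Complex.exp (Complex.I * k * |x - y|)
              - Complex.exp (Complex.I * k * |x + y - 2 * b|)) / (2 * Complex.I * k))
      = -Complex.exp (Complex.I * k * (x + y - 2 * b)) / (2 * Complex.I * k))
    ∧
    (-(2 / Real.pi) * ∫ k in Set.Ioi (0 : ℝ),
        k ^ 2 * (Real.exp (-k * (x + y - 2 * b)) / (2 * k))
      = -1 / (Real.pi * (x + y - 2 * b) ^ 2))
    ∧
    (-1 / (Real.pi * (x + x - 2 * b) ^ 2) = -1 / (4 * Real.pi * (x - b) ^ 2)) := by
  have ha : (0:ℝ) < x + y - 2 * b := by linarith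
  refine ⟨fun k hk => ?_, ?_, ?_⟩
  · have habs : |x + y - 2 * b| = x + y - 2 * b := abs_of_pos ha
    rw [habs]
    push_cast
    ring
  · have h1 : ∀ k ∈ Set.Ioi (0:ℝ),
        k ^ 2 * (Real.exp (-k * (x + y - 2 * b)) / (2 * k))
          = (1/2) * (k ^ ((2:ℝ) - 1) * Real.exp (-((x + y - 2 * b) * k))) := by
      intro k hk
      have hk0 : (k:ℝ) ≠ 0 := ne_of_gt hk
      rw [show ((2:ℝ) - 1) = 1 by norm_num, Real.rpow_one]
      field_simp
    rw [setIntegral_congr_fun measurableSet_Ioi h1, integral_const_mul,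
      Real.integral_rpow_mul_exp_neg_mul_Ioi two_pos ha, Real.Gamma_two]
    have hπ : Real.pi ≠ 0 := Real.pi_ne_zero
    rw [show ((2:ℝ)) = ((2:ℕ):ℝ) by norm_num, Real.rpow_natCast]
    have ha' : (x + y - 2 * b) ≠ 0 := ne_of_gt ha
    field_simp
  · have hb : x + x - 2 * b = 2 * (x - b) := by ring
    rw [hb]
    have : Real.pi * (2 * (x - b)) ^ 2 = 4 * Real.pi * (x - b) ^ 2 := by ring
    rw [this]
end

section
/- For a < b, the compact evaluation ∫₀^∞ k·cosh(ak)/sinh(bk) dk = (π²/(4b²))·sec²(aπ/(2b)) holds whenever |a| < b, b > 0. -/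
open MeasureTheory

section Aux

open Real Set Filter
open scoped Real ENNReal

lemma integrableOn_id_mul_exp {c : ℝ} (hc : 0 < c) :
    IntegrableOn (fun k : ℝ => k * Real.exp (-(c * k))) (Set.Ioi 0) := by
  have h := integrableOn_rpow_mul_exp_neg_mul_rpow (p := 1) (s := 1) (b := c)
    (by norm_num) (by norm_num) hc
  refine (integrableOn_congr_fun (fun x hx => ?_) measurableSet_Ioi).mp h
  simp [Real.rpow_one, neg_mul]

lemma integral_id_mul_exp {c : ℝ} (hc : 0 < c) :
    ∫ k in Set.Ioi (0:ℝ), k * Real.exp (-(c * k)) = 1 / c ^ 2 := by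
  have hD : ∀ x ∈ Set.Ici (0:ℝ), HasDerivAt (fun k : ℝ => -((k / c + 1 / c ^ 2) * Real.exp (-(c * k))))
      (x * Real.exp (-(c * x))) x := by
    intro x _
    have h1 : HasDerivAt (fun k : ℝ => k / c + 1 / c ^ 2) (1 / c) x := by
      exact ((hasDerivAt_id x).div_const c).add_const (1 / c ^ 2)
    have h2 : HasDerivAt (fun k : ℝ => Real.exp (-(c * k))) (-c * Real.exp (-(c * x))) x := by
      have : HasDerivAt (fun k : ℝ => -(c * k)) (-c) x := by
        simpa [Pi.neg_def] using ((hasDerivAt_id x).const_mul c).neg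
      simpa [mul_comm, Function.comp_def] using (Real.hasDerivAt_exp _).comp x this
    have := (h1.mul h2).neg
    refine this.congr_deriv ?_
    field_simp
    ring
  have hlim : Tendsto (fun k : ℝ => -((k / c + 1 / c ^ 2) * Real.exp (-(c * k)))) atTop (nhds 0) := by
    have h1 : Tendsto (fun k : ℝ => (k / c + 1 / c ^ 2) * Real.exp (-(c * k))) atTop (nhds 0) := by
      have hA : Tendsto (fun k : ℝ => k * Real.exp (-(c * k))) atTop (nhds 0) := by
        have := tendsto_rpow_mul_exp_neg_mul_atTop_nhds_zero 1 c hc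
        refine this.congr' ?_
        filter_upwards [eventually_gt_atTop (0:ℝ)] with x hx
        rw [Real.rpow_one, neg_mul]
      have hB : Tendsto (fun k : ℝ => Real.exp (-(c * k))) atTop (nhds 0) := by
        have h0 : Tendsto (fun x : ℝ => c * x) atTop atTop := tendsto_id.const_mul_atTop hc
        exact Real.tendsto_exp_atBot.comp (tendsto_neg_atTop_atBot.comp h0)
      have := ((hA.const_mul (1/c)).add (hB.const_mul (1/c^2)))
      simpa using this.congr (fun k => by ring)
    simpa using h1.neg
  have := integral_Ioi_of_hasDerivAt_of_tendsto' hD (integrableOn_id_mul_exp hc) hlim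
  rw [this]; simp

lemma hasSum_int_one_div_sub_sq {y : ℝ} (hy : ∀ n : ℤ, y ≠ (n : ℝ)) :
    HasSum (fun n : ℤ => 1 / (y - (n : ℝ)) ^ 2) (π ^ 2 / Real.sin (π * y) ^ 2) := by
  haveI : Fact ((0:ℝ) < 1) := ⟨one_pos⟩
  have hsin : Real.sin (π * y) ≠ 0 := by
    rw [Real.sin_ne_zero_iff]
    intro n h
    exact hy n (by have := h; nlinarith [Real.pi_pos, h])
  set g : ℝ → ℂ := fun t => Complex.exp (((2 * π * y * t : ℝ) : ℂ) * Complex.I) with hg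
  have hgcont : Continuous g := by
    apply Complex.continuous_exp.comp
    exact (Complex.continuous_ofReal.comp (by continuity)).mul continuous_const
  set F : AddCircle (1:ℝ) → ℂ := AddCircle.liftIoc 1 0 g with hF
  have hFnorm : ∀ z : AddCircle (1:ℝ), ‖F z‖ = 1 := by
    intro z
    rw [hF]
    show ‖(Set.Ioc (0:ℝ) (0+1)).restrict g ((AddCircle.equivIoc 1 0) z)‖ = 1
    rw [hg]
    exact Complex.norm_exp_ofReal_mul_I _
  have hFmeas : Measurable F := by
    exact (hgcont.measurable.comp measurable_subtype_coe).comp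
      (AddCircle.measurableEquivIoc 1 0).measurable
  have hmem : MemLp F 2 (AddCircle.haarAddCircle) :=
    MemLp.of_bound hFmeas.aestronglyMeasurable 1 (Filter.Eventually.of_forall fun x => (hFnorm x).le)
  set fL := hmem.toLp F with hfL
  have hcoeff : ∀ n : ℤ, fourierCoeff (fL : AddCircle (1:ℝ) → ℂ) n = fourierCoeff F n := by
    intro n
    simp only [fourierCoeff]
    apply integral_congr_ae
    filter_upwards [hmem.coeFn_toLp] with t ht
    rw [ht]
  have hc0 : ∀ n : ℤ, ((2 * π * (y - (n:ℝ)) : ℝ) : ℂ) * Complex.I ≠ 0 := by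
    intro n
    apply mul_ne_zero _ Complex.I_ne_zero
    rw [Complex.ofReal_ne_zero]
    have : y - (n:ℝ) ≠ 0 := sub_ne_zero.mpr (hy n)
    have hpi := Real.pi_ne_zero
    intro h
    apply this
    nlinarith [Real.pi_pos]
  have hFc : ∀ n : ℤ, fourierCoeff F n
      = (Complex.exp (((2 * π * y : ℝ) : ℂ) * Complex.I) - 1)
        / (((2 * π * (y - (n:ℝ)) : ℝ) : ℂ) * Complex.I) := by
    intro n
    rw [hF, fourierCoeff_liftIoc_eq, fourierCoeffOn_eq_integral]
    have hint : ∀ x : ℝ, fourier (-n) (x : AddCircle ((0:ℝ)+1-0)) • g x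
        = Complex.exp ((((2 * π * (y - (n:ℝ)) : ℝ) : ℂ) * Complex.I) * (x : ℂ)) := by
      intro x
      rw [fourier_coe_apply, hg, smul_eq_mul, ← Complex.exp_add]
      congr 1
      push_cast
      ring
    simp_rw [hint]
    rw [integral_exp_mul_complex (hc0 n)]
    have h1 : (((2 * π * (y - (n:ℝ)) : ℝ) : ℂ) * Complex.I) * ((0:ℝ)+1 : ℂ)
        = ((2 * π * y : ℝ) : ℂ) * Complex.I + (-n : ℤ) * (2 * π * Complex.I) := by
      push_cast; ring
    have h2 : Complex.exp ((((2 * π * (y - (n:ℝ)) : ℝ) : ℂ) * Complex.I) * ((0:ℝ)+1 : ℂ))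
        = Complex.exp (((2 * π * y : ℝ) : ℂ) * Complex.I) := by
      rw [h1, Complex.exp_add, Complex.exp_int_mul_two_pi_mul_I, mul_one]
    push_cast at h2 ⊢
    rw [h2]
    simp
  have hnorm : ∀ n : ℤ, ‖fourierCoeff F n‖ ^ 2
      = (Real.sin (π * y) ^ 2 / π ^ 2) * (1 / (y - (n:ℝ)) ^ 2) := by
    intro n
    rw [hFc n, norm_div, div_pow]
    have hnum : ‖Complex.exp (((2 * π * y : ℝ) : ℂ) * Complex.I) - 1‖ ^ 2
        = 4 * Real.sin (π * y) ^ 2 := by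
      have he : Complex.exp (((2 * π * y : ℝ) : ℂ) * Complex.I) - 1
          = ((Real.cos (2 * π * y) - 1 : ℝ) : ℂ) + ((Real.sin (2 * π * y) : ℝ) : ℂ) * Complex.I := by
        rw [Complex.exp_mul_I]
        push_cast [Complex.ofReal_cos, Complex.ofReal_sin]
        ring
      rw [he]
      rw [Complex.sq_norm, Complex.normSq_add_mul_I]
      have h2 : Real.cos (2 * π * y) = 1 - 2 * Real.sin (π * y) ^ 2 := by
        have := Real.cos_two_mul (π * y)
        have hpc := Real.sin_sq_add_cos_sq (π * y)
        have h2e : 2 * π * y = 2 * (π * y) := by ring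
        rw [h2e, this]; nlinarith
      nlinarith [Real.sin_sq_add_cos_sq (2 * π * y)]
    have hden : ‖(((2 * π * (y - (n:ℝ)) : ℝ) : ℂ) * Complex.I)‖ ^ 2
        = 4 * π ^ 2 * (y - (n:ℝ)) ^ 2 := by
      rw [norm_mul, Complex.norm_I, mul_one, Complex.norm_real, Real.norm_eq_abs, _root_.sq_abs]
      ring
    rw [hnum, hden]
    have hpi2 : (π:ℝ) ^ 2 ≠ 0 := pow_ne_zero 2 Real.pi_ne_zero
    have hyn : (y - (n:ℝ)) ^ 2 ≠ 0 := pow_ne_zero 2 (sub_ne_zero.mpr (hy n))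
    field_simp
  have hsummable : Summable fun n : ℤ => ‖fourierCoeff F n‖ ^ 2 := by
    have h := (lp.memℓp (fourierBasis.repr fL)).summable
      (by norm_num : (0:ℝ) < ((2:ℝ≥0∞)).toReal)
    have h2 : Summable fun n : ℤ => ‖fourierCoeff (fL : AddCircle (1:ℝ) → ℂ) n‖ ^ 2 := by
      refine h.congr fun n => ?_
      rw [fourierBasis_repr]
      rw [show ((2:ℝ≥0∞).toReal) = ((2:ℕ):ℝ) by norm_num, Real.rpow_natCast]
    exact h2.congr fun n => by rw [hcoeff n]
  have hpars : ∑' n : ℤ, ‖fourierCoeff F n‖ ^ 2 = 1 := by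
    have h1 : ∑' n : ℤ, ‖fourierCoeff (fL : AddCircle (1:ℝ) → ℂ) n‖ ^ 2
        = ∫ t : AddCircle (1:ℝ), ‖(fL : AddCircle (1:ℝ) → ℂ) t‖ ^ 2 ∂AddCircle.haarAddCircle :=
      tsum_sq_fourierCoeff fL
    have h2 : ∫ t : AddCircle (1:ℝ), ‖(fL : AddCircle (1:ℝ) → ℂ) t‖ ^ 2 ∂AddCircle.haarAddCircle
        = 1 := by
      have hae : ∀ᵐ t ∂(AddCircle.haarAddCircle (T := 1)), ‖(fL : AddCircle (1:ℝ) → ℂ) t‖ ^ 2 = 1 := by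
        filter_upwards [hmem.coeFn_toLp] with t ht
        rw [ht, hFnorm t]; norm_num
      rw [integral_congr_ae hae]
      simp
    exact (tsum_congr fun n => by rw [hcoeff n] : ∑' n : ℤ, ‖fourierCoeff F n‖ ^ 2 = _).trans
      (h1.trans h2)
  have hK : Real.sin (π * y) ^ 2 / π ^ 2 ≠ 0 := by
    apply div_ne_zero (pow_ne_zero 2 hsin) (pow_ne_zero 2 Real.pi_ne_zero)
  have hS : Summable fun n : ℤ => 1 / (y - (n:ℝ)) ^ 2 := by
    have := hsummable.congr hnorm
    exact (summable_mul_left_iff hK).mp this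
  have htsum : ∑' n : ℤ, 1 / (y - (n:ℝ)) ^ 2 = π ^ 2 / Real.sin (π * y) ^ 2 := by
    have h1 : ∑' n : ℤ, (Real.sin (π * y) ^ 2 / π ^ 2) * (1 / (y - (n:ℝ)) ^ 2) = 1 := by
      rw [← tsum_congr hnorm]; exact hpars
    rw [tsum_mul_left] at h1
    field_simp at h1 ⊢
    linarith
  exact hS.hasSum_iff.mpr htsum

end Aux

section Main

open Real Set Filter
open scoped Real ENNReal

/-- `∫₀^∞ k·cosh(ak)/sinh(bk) dk = (π²/(4b²))·sec²(aπ/(2b))` for `|a| < b`, `b > 0`. -/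
theorem integral_mul_cosh_div_sinh (a b : ℝ) (hb : 0 < b) (hab : |a| < b) :
    ∫ k in Set.Ioi (0 : ℝ), k * Real.cosh (a * k) / Real.sinh (b * k)
      = (Real.pi ^ 2 / (4 * b ^ 2)) * (1 / Real.cos (a * Real.pi / (2 * b))) ^ 2 := by
  obtain ⟨ha1, ha2⟩ := abs_lt.mp hab
  set cm : ℕ → ℝ := fun n => (2 * n + 1) * b - a with hcm
  set cp : ℕ → ℝ := fun n => (2 * n + 1) * b + a with hcp
  have hcmpos : ∀ n, 0 < cm n := by
    intro n; rw [hcm]; have : (0:ℝ) ≤ n := n.cast_nonneg; dsimp only; nlinarith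
  have hcppos : ∀ n, 0 < cp n := by
    intro n; rw [hcp]; have : (0:ℝ) ≤ n := n.cast_nonneg; dsimp only; nlinarith
  set f : ℕ → ℝ → ℝ :=
    fun n k => k * Real.exp (-(cm n * k)) + k * Real.exp (-(cp n * k)) with hf
  -- pointwise has-sum
  have hpt : ∀ k : ℝ, k ∈ Set.Ioi (0:ℝ) →
      HasSum (fun n => f n k) (k * Real.cosh (a * k) / Real.sinh (b * k)) := by
    intro k hk
    rw [Set.mem_Ioi] at hk
    have hr1 : Real.exp (-(2 * b * k)) < 1 := by
      rw [Real.exp_lt_one_iff]; nlinarith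
    have hr0 : 0 ≤ Real.exp (-(2 * b * k)) := (Real.exp_pos _).le
    have hgeo := hasSum_geometric_of_lt_one hr0 hr1
    have h2 := hgeo.mul_left (k * (Real.exp (-((b - a) * k)) + Real.exp (-((b + a) * k))))
    have hcongr : ∀ n : ℕ,
        k * (Real.exp (-((b - a) * k)) + Real.exp (-((b + a) * k))) * Real.exp (-(2 * b * k)) ^ n
          = f n k := by
      intro n
      rw [hf]
      dsimp only
      rw [← Real.exp_nat_mul,
        show -(((2 * (n:ℝ) + 1) * b - a) * k) = -((b - a) * k) + (n:ℝ) * -(2 * b * k) by ring,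
        show -(((2 * (n:ℝ) + 1) * b + a) * k) = -((b + a) * k) + (n:ℝ) * -(2 * b * k) by ring,
        Real.exp_add, Real.exp_add]
      ring
    rw [show (fun n : ℕ => k * (Real.exp (-((b - a) * k)) + Real.exp (-((b + a) * k))) *
        Real.exp (-(2 * b * k)) ^ n) = fun n => f n k from funext hcongr] at h2
    convert h2 using 1
    · rfl
    rw [Real.cosh_eq, Real.sinh_eq]
    have hsp : 0 < Real.exp (b * k) - Real.exp (-(b * k)) := by
      rw [sub_pos]; apply Real.exp_lt_exp.mpr; nlinarith
    have h1r : 0 < 1 - Real.exp (-(2 * b * k)) := by linarith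
    have e1 : Real.exp (-((b - a) * k)) = Real.exp (a * k) * Real.exp (-(b * k)) := by
      rw [← Real.exp_add]; ring_nf
    have e2 : Real.exp (-((b + a) * k)) = Real.exp (-(a * k)) * Real.exp (-(b * k)) := by
      rw [← Real.exp_add]; ring_nf
    have e3 : Real.exp (-(2 * b * k)) = Real.exp (-(b * k)) * Real.exp (-(b * k)) := by
      rw [← Real.exp_add]; ring_nf
    have e4 : Real.exp (b * k) * Real.exp (-(b * k)) = 1 := by
      rw [← Real.exp_add]; simp
    have key : 1 - Real.exp (-(b * k)) * Real.exp (-(b * k))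
        = Real.exp (-(b * k)) * (Real.exp (b * k) - Real.exp (-(b * k))) := by
      rw [mul_sub, mul_comm (Real.exp (-(b * k))) (Real.exp (b * k)), e4]
    rw [e1, e2, e3, key]
    have hu : Real.exp (-(b * k)) ≠ 0 := (Real.exp_pos _).ne'
    have hU : Real.exp (b * k) - Real.exp (-(b * k)) ≠ 0 := hsp.ne'
    field_simp
  -- integrability and integral values
  have hfint : ∀ n, IntegrableOn (f n) (Set.Ioi 0) := fun n =>
    (integrableOn_id_mul_exp (hcmpos n)).add (integrableOn_id_mul_exp (hcppos n))
  have hfval : ∀ n, ∫ k in Set.Ioi (0:ℝ), f n k = 1 / cm n ^ 2 + 1 / cp n ^ 2 := by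
    intro n
    rw [hf]
    dsimp only
    rw [integral_add (integrableOn_id_mul_exp (hcmpos n)) (integrableOn_id_mul_exp (hcppos n)),
      integral_id_mul_exp (hcmpos n), integral_id_mul_exp (hcppos n)]
  -- sum evaluation via Parseval
  set y : ℝ := (a - b) / (2 * b) with hy
  have hy1 : -1 < y := by
    rw [hy, lt_div_iff₀ (by positivity : (0:ℝ) < 2*b)]
    nlinarith
  have hy2 : y < 0 := div_neg_of_neg_of_pos (by linarith) (by positivity)
  have hyint : ∀ n : ℤ, y ≠ (n:ℝ) := by
    intro n hn
    have h0 : (-1:ℝ) < (n:ℝ) := hn ▸ hy1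
    have h1 : ((n:ℝ)) < 0 := hn ▸ hy2
    have h0' : (-1:ℤ) < n := by exact_mod_cast h0
    have h1' : n < 0 := by exact_mod_cast h1
    omega
  have hZ := hasSum_int_one_div_sub_sq hyint
  have hN := hZ.nat_add_neg_add_one
  have hterm : (fun n : ℕ => 1/(y - (((n:ℕ):ℤ):ℝ))^2 + 1/(y - (((-((n:ℕ)+1)):ℤ):ℝ))^2)
      = fun n : ℕ => (4*b^2) * (1 / cm n ^ 2 + 1 / cp n ^ 2) := by
    funext n
    rw [hy, hcm, hcp]
    dsimp only
    have hX : ((2*(n:ℝ)+1)*b - a) ≠ 0 := (hcmpos n).ne'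
    have hY : ((2*(n:ℝ)+1)*b + a) ≠ 0 := (hcppos n).ne'
    have h1 : (a-b)/(2*b) - (((n:ℕ):ℤ):ℝ) = -(((2*(n:ℝ)+1)*b - a))/(2*b) := by
      push_cast
      field_simp
      ring
    have h2 : (a-b)/(2*b) - (((-((n:ℕ)+1)):ℤ):ℝ) = (((2*(n:ℝ)+1)*b + a))/(2*b) := by
      push_cast
      field_simp
      ring
    have h2b : ((2:ℝ)*b)^2 = 4*b^2 := by ring
    rw [h1, h2, div_pow, div_pow, neg_sq, one_div_div, one_div_div, h2b]
    ring
  rw [hterm] at hN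
  have h4b : (4*b^2 : ℝ) ≠ 0 := by positivity
  have hNS : HasSum (fun n : ℕ => 1 / cm n ^ 2 + 1 / cp n ^ 2)
      (π ^ 2 / Real.sin (π * y) ^ 2 / (4*b^2)) := by
    have h := hN.mul_left ((4*b^2 : ℝ)⁻¹)
    simp only [← mul_assoc, inv_mul_cancel₀ h4b, one_mul] at h
    convert h using 1
    · rfl
    field_simp
  -- swap integral and sum
  have hmeasf : ∀ n, AEStronglyMeasurable (f n) (volume.restrict (Set.Ioi 0)) := fun n =>
    (hfint n).aestronglyMeasurable
  have hpos : ∀ n : ℕ, (0:ℝ) ≤ 1 / cm n ^ 2 + 1 / cp n ^ 2 := fun n => by positivity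
  have hlint : ∑' n, ∫⁻ k in Set.Ioi (0:ℝ), ‖f n k‖ₑ ≠ ⊤ := by
    have hval : ∀ n, ∫⁻ k in Set.Ioi (0:ℝ), ‖f n k‖ₑ
        = ENNReal.ofReal (1 / cm n ^ 2 + 1 / cp n ^ 2) := by
      intro n
      rw [← ofReal_integral_norm_eq_lintegral_enorm (hfint n)]
      congr 1
      rw [← hfval n]
      apply integral_congr_ae
      filter_upwards [ae_restrict_mem measurableSet_Ioi] with k hk
      rw [Real.norm_eq_abs, abs_of_nonneg]
      rw [hf]
      dsimp only
      rw [Set.mem_Ioi] at hk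
      positivity
    rw [tsum_congr hval, ← ENNReal.ofReal_tsum_of_nonneg hpos hNS.summable]
    exact ENNReal.ofReal_ne_top
  have hswap := integral_tsum hmeasf hlint
  have hcongrae : ∀ᵐ k ∂(volume.restrict (Set.Ioi 0)),
      k * Real.cosh (a*k) / Real.sinh (b*k) = ∑' n, f n k := by
    filter_upwards [ae_restrict_mem measurableSet_Ioi] with k hk
    exact ((hpt k hk).tsum_eq).symm
  rw [integral_congr_ae hcongrae, hswap, tsum_congr hfval, hNS.tsum_eq]
  -- final trigonometry
  have hsin : Real.sin (π * y) = -Real.cos (a * π / (2*b)) := by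
    rw [hy, show π * ((a-b)/(2*b)) = a*π/(2*b) - π/2 by field_simp,
      Real.sin_sub_pi_div_two]
  have hcosne : Real.cos (a * π / (2*b)) ≠ 0 := by
    apply ne_of_gt
    apply Real.cos_pos_of_mem_Ioo
    constructor
    · rw [lt_div_iff₀ (by positivity : (0:ℝ) < 2*b)]
      nlinarith [Real.pi_pos]
    · rw [div_lt_iff₀ (by positivity : (0:ℝ) < 2*b)]
      nlinarith [Real.pi_pos]
  rw [hsin]
  field_simp

end Main
end

section
/- With h as in the 1D two-interval Casimir setup, the derivative of E_rel(a₂) = -π/(24(a₂-b₁)) with respect to a₂ equals π/(24(a₂-b₁)²), and this equals -(1/4)·(-π/(6(a₂-b₁)²)), verifying the Hadamard variation identity δE_rel = -(1/4)[∂_ν∂_ν'(H_O^{-1} - H_{O₂}^{-1})](a₂,a₂) with [∂_x∂_y(H_O^{-1} - H_{O₂}^{-1})](a₂,a₂) = (2/π)∫₀^∞(k - k·coth(k(a₂-b₁)))dk = -π/(6(a₂-b₁)²). -/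
open MeasureTheory Set


lemma derivA (b₁ a₂ : ℝ) (h : b₁ < a₂) :
    deriv (fun t : ℝ => -Real.pi / (24 * (t - b₁))) a₂ = Real.pi / (24 * (a₂ - b₁) ^ 2) := by
  have hne : a₂ - b₁ ≠ 0 := sub_ne_zero.mpr h.ne'
  have h1 : HasDerivAt (fun t : ℝ => t - b₁) 1 a₂ := (hasDerivAt_id a₂).sub_const b₁
  have h2 : HasDerivAt (fun t : ℝ => (t - b₁)⁻¹) (-1 / (a₂ - b₁) ^ 2) a₂ := by
    exact h1.inv hne
  have h3 := h2.const_mul (-Real.pi / 24)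
  have hfun : (fun t : ℝ => -Real.pi / 24 * (t - b₁)⁻¹)
      = fun t : ℝ => -Real.pi / (24 * (t - b₁)) := by
    funext t
    rw [div_mul_eq_div_div, div_eq_mul_inv (-Real.pi / 24)]
  rw [hfun] at h3
  rw [h3.deriv]
  field_simp

-- pointwise sum
lemma ptsum (L k : ℝ) (hL : 0 < L) (hk : 0 < k) :
    HasSum (fun n : ℕ => 2 * k * Real.exp (-(2 * ((n : ℝ) + 1) * L) * k))
      (k * (Real.cosh (k * L) / Real.sinh (k * L)) - k) := by
  set r : ℝ := Real.exp (-(2 * L * k)) with hr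
  have hr0 : 0 < r := Real.exp_pos _
  have hr1 : r < 1 := Real.exp_lt_one_iff.mpr (by nlinarith)
  have geo : HasSum (fun n : ℕ => (2 * k * r) * r ^ n) ((2 * k * r) * (1 - r)⁻¹) :=
    (hasSum_geometric_of_lt_one hr0.le hr1).mul_left _
  have hfun : (fun n : ℕ => (2 * k * r) * r ^ n)
      = fun n : ℕ => 2 * k * Real.exp (-(2 * ((n : ℝ) + 1) * L) * k) := by
    funext n
    rw [hr, ← Real.exp_nat_mul, mul_assoc, ← Real.exp_add]
    congr 1
    ring
  have hval : (2 * k * r) * (1 - r)⁻¹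
      = k * (Real.cosh (k * L) / Real.sinh (k * L)) - k := by
    have hs : 0 < Real.sinh (k * L) := by rw [Real.sinh_pos_iff]; positivity
    set u : ℝ := Real.exp (k * L) with hu
    have hu0 : 0 < u := Real.exp_pos _
    have hu1 : 1 < u := by rw [hu]; exact Real.one_lt_exp_iff.mpr (by positivity)
    have hrequ : r = u⁻¹ * u⁻¹ := by
      rw [hr, hu, ← Real.exp_neg, ← Real.exp_add]; ring_nf
    have hcs : Real.cosh (k * L) = (u + u⁻¹) / 2 := by
      rw [Real.cosh_eq, hu, Real.exp_neg]
    have hss : Real.sinh (k * L) = (u - u⁻¹) / 2 := by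
      rw [Real.sinh_eq, hu, Real.exp_neg]
    have h5 : u - u⁻¹ ≠ 0 := by
      rw [hss] at hs; intro h; rw [h] at hs; norm_num at hs
    have h6 : 1 - u⁻¹ * u⁻¹ ≠ 0 := by rw [← hrequ]; intro h; nlinarith
    rw [hrequ, hcs, hss]
    have h0 : u ≠ 0 := hu0.ne'
    have h2 : (-1 : ℝ) + u ^ 2 ≠ 0 := by
      intro h; nlinarith
    field_simp
    have h7 : u ^ 2 - 1 ≠ 0 := fun h => h2 (by linarith)
    rw [div_sub_one h7]; ring
  rw [← hfun, ← hval]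
  exact geo

lemma termint (c : ℝ) (hc : 0 < c) :
    IntegrableOn (fun k : ℝ => 2 * k * Real.exp (-c * k)) (Ioi 0) ∧
    ∫ k in Ioi (0:ℝ), 2 * k * Real.exp (-c * k) = 2 / c ^ 2 := by
  have hi := integrableOn_rpow_mul_exp_neg_mul_rpow (p := 1) (s := 1) (b := c)
    (by norm_num) one_pos hc
  simp only [Real.rpow_one] at hi
  constructor
  · exact (hi.const_mul 2).congr (Filter.Eventually.of_forall (fun x => by ring))
  · have hI := Real.integral_rpow_mul_exp_neg_mul_Ioi (a := 2) (r := c) two_pos hc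
    rw [show (2:ℝ) - 1 = 1 by norm_num] at hI
    simp only [Real.rpow_one, Real.Gamma_two, mul_one] at hI
    have : ∫ k in Ioi (0:ℝ), 2 * k * Real.exp (-c * k)
        = 2 * ∫ k in Ioi (0:ℝ), k * Real.exp (-(c * k)) := by
      rw [← integral_const_mul]
      exact setIntegral_congr_fun measurableSet_Ioi (fun x _ => by ring_nf)
    rw [this, hI]
    field_simp
    have hc2 : c ^ 2 * (1 / c) ^ 2 = 1 := by rw [← mul_pow, mul_one_div_cancel hc.ne', one_pow]
    rw [Real.rpow_two]
    exact hc2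

lemma zeta2_shift : HasSum (fun n : ℕ => (1:ℝ) / ((n:ℝ) + 1) ^ 2) (Real.pi ^ 2 / 6) := by
  have h := (hasSum_nat_add_iff (f := fun n : ℕ => (1:ℝ) / (n:ℝ) ^ 2) 1).mpr
    (by simpa using hasSum_zeta_two)
  refine h.congr_fun fun n => ?_
  push_cast
  ring_nf

lemma keyint (L : ℝ) (hL : 0 < L) :
    ∫ k in Ioi (0:ℝ), (k - k * (Real.cosh (k * L) / Real.sinh (k * L)))
      = -(Real.pi ^ 2 / (12 * L ^ 2)) := by
  set F : ℕ → ℝ → ℝ := fun n k => 2 * k * Real.exp (-(2 * ((n:ℝ) + 1) * L) * k) with hF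
  have hc : ∀ n : ℕ, (0:ℝ) < 2 * ((n:ℝ) + 1) * L := fun n => by positivity
  have hFi : ∀ n, IntegrableOn (F n) (Ioi 0) := fun n => (termint _ (hc n)).1
  have hFval : ∀ n, ∫ k in Ioi (0:ℝ), F n k = 1 / (2 * L ^ 2) * (1 / ((n:ℝ) + 1) ^ 2) := by
    intro n
    rw [(termint _ (hc n)).2]
    have h1 : ((n:ℝ) + 1) ≠ 0 := by positivity
    field_simp
  have hnorm : ∀ n, (∫ k in Ioi (0:ℝ), ‖F n k‖) = 1 / (2 * L ^ 2) * (1 / ((n:ℝ) + 1) ^ 2) := by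
    intro n
    rw [← hFval n]
    refine setIntegral_congr_fun measurableSet_Ioi (fun k hk => ?_)
    have hk' : (0:ℝ) < k := hk
    simp only [hF]
    exact Real.norm_of_nonneg (by positivity)
  have hsumm : Summable fun n => ∫ k in Ioi (0:ℝ), ‖F n k‖ := by
    simp_rw [hnorm]
    exact (zeta2_shift.mul_left _).summable
  have hHS : HasSum (fun n => ∫ k in Ioi (0:ℝ), F n k)
      (∫ k in Ioi (0:ℝ), ∑' n, F n k) :=
    hasSum_integral_of_summable_integral_norm hFi hsumm
  have hHS2 : HasSum (fun n => ∫ k in Ioi (0:ℝ), F n k)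
      (Real.pi ^ 2 / (12 * L ^ 2)) := by
    have h := zeta2_shift.mul_left (1 / (2 * L ^ 2))
    have hv : 1 / (2 * L ^ 2) * (Real.pi ^ 2 / 6) = Real.pi ^ 2 / (12 * L ^ 2) := by
      field_simp; ring
    rw [hv] at h
    exact h.congr_fun fun n => hFval n
  have htsum : ∫ k in Ioi (0:ℝ), ∑' n, F n k = Real.pi ^ 2 / (12 * L ^ 2) :=
    hHS.unique hHS2
  have hcong : ∫ k in Ioi (0:ℝ), (k - k * (Real.cosh (k * L) / Real.sinh (k * L)))
      = ∫ k in Ioi (0:ℝ), -(∑' n, F n k) := by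
    refine setIntegral_congr_fun measurableSet_Ioi (fun k hk => ?_)
    have := (ptsum L k hL hk).tsum_eq
    rw [hF]
    rw [this]
    ring
  rw [hcong, integral_neg, htsum]

/-- Hadamard variation identity in the 1-D two-interval Casimir setup
(`O₁ = (a₁,b₁)`, `O₂ = (a₂,b₂)`, `a₁ < b₁ < a₂ < b₂`):
(i) `d/da₂ E_rel(a₂) = π/(24(a₂-b₁)²)` for `E_rel(a₂) = -π/(24(a₂-b₁))`;
(ii) `[∂_ν∂_ν'(H_O⁻¹ - H_{O₂}⁻¹)](a₂,a₂) = (2/π)∫₀^∞ (k - k·coth(k(a₂-b₁))) dk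
      = -π/(6(a₂-b₁)²)`;
(iii) `δE_rel = -(1/4)·[∂_ν∂_ν'(H_O⁻¹ - H_{O₂}⁻¹)](a₂,a₂)`. -/
theorem one_dim_hadamard_variation_identity
    (a₁ b₁ a₂ b₂ : ℝ) (h₁ : a₁ < b₁) (h₂ : b₁ < a₂) (h₃ : a₂ < b₂) :
    deriv (fun t : ℝ => -Real.pi / (24 * (t - b₁))) a₂
        = Real.pi / (24 * (a₂ - b₁) ^ 2)
    ∧
    (2 / Real.pi) * (∫ k in Set.Ioi (0 : ℝ),
        (k - k * (Real.cosh (k * (a₂ - b₁)) / Real.sinh (k * (a₂ - b₁)))))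
      = -Real.pi / (6 * (a₂ - b₁) ^ 2)
    ∧
    deriv (fun t : ℝ => -Real.pi / (24 * (t - b₁))) a₂
      = -(1 / 4) * ((2 / Real.pi) * (∫ k in Set.Ioi (0 : ℝ),
          (k - k * (Real.cosh (k * (a₂ - b₁)) / Real.sinh (k * (a₂ - b₁)))))) := by

  have hL : 0 < a₂ - b₁ := sub_pos.mpr h₂
  have hI := keyint (a₂ - b₁) hL
  have hd := derivA b₁ a₂ h₂
  have h2' : (2 / Real.pi) * (∫ k in Set.Ioi (0 : ℝ),
        (k - k * (Real.cosh (k * (a₂ - b₁)) / Real.sinh (k * (a₂ - b₁)))))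
      = -Real.pi / (6 * (a₂ - b₁) ^ 2) := by
    rw [hI]
    field_simp
    ring
  refine ⟨hd, h2', ?_⟩
  rw [hd, h2']
  field_simp
  norm_num
end

section
/- Let f : (0,∞) → ℝ be continuous with f(t) = O(e^{-ct}) as t → ∞ for some c > 0, and admitting an asymptotic expansion f(t) ~ t^{-(d-1)/2} Σ_{k≥0} a_k t^k as t → 0⁺ (in the sense that for every N, f(t) - t^{-(d-1)/2}Σ_{k<N} a_k t^k = O(t^{N-(d-1)/2})). Then the Mellin transform ζ(s) = (1/Γ(s))∫₀^∞ t^{s-1} f(t) dt, absolutely convergent for Re(s) > (d-1)/2, extends to a meromorphic function on ℂ whose only possible poles are simple poles at s = (d-1)/2 - k, k ∈ ℕ₀, with residue a_k/Γ((d-1)/2 - k) (in particular no pole when (d-1)/2 - k is a non-positive integer). -/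
open MeasureTheory

open Set Filter Asymptotics

noncomputable def melE (α : ℝ) (k : ℕ) : ℝ → ℂ :=
  Set.indicator (Set.Ioc 0 1) (fun t : ℝ => (t : ℂ) ^ ((k : ℂ) - (α : ℂ)))

noncomputable def melF (α : ℝ) (f : ℝ → ℝ) (a : ℕ → ℝ) (N : ℕ) : ℝ → ℂ :=
  fun t => (f t : ℂ) - ∑ k ∈ Finset.range N, (a k : ℂ) * melE α k t

noncomputable def melW (α : ℝ) (a : ℕ → ℝ) (k : ℕ) (s : ℂ) : ℂ :=
  (a k : ℂ) * (dslope (fun z => (Complex.Gamma z)⁻¹) ((α : ℂ) - (k : ℂ)) s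
    + (Complex.Gamma ((α : ℂ) - (k : ℂ)))⁻¹ * (s - ((α : ℂ) - (k : ℂ)))⁻¹)

noncomputable def melPsi (α : ℝ) (f : ℝ → ℝ) (a : ℕ → ℝ) (N : ℕ) (s : ℂ) : ℂ :=
  (Complex.Gamma s)⁻¹ * mellin (melF α f a N) s + ∑ k ∈ Finset.range N, melW α a k s

lemma melE_eq (α : ℝ) (k : ℕ) {t : ℝ} (ht : t ∈ Set.Ioc (0:ℝ) 1) :
    melE α k t = ((t ^ (-α) * t ^ k : ℝ) : ℂ) := by
  rw [melE, Set.indicator_of_mem ht,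
    show ((k:ℂ) - (α:ℂ)) = (((-α + k : ℝ)) : ℂ) by push_cast; ring,
    ← Complex.ofReal_cpow ht.1.le, Real.rpow_add ht.1, Real.rpow_natCast]

lemma melF_eq {α : ℝ} {f : ℝ → ℝ} {a : ℕ → ℝ} {N : ℕ} {t : ℝ} (ht : t ∈ Set.Ioc (0:ℝ) 1) :
    melF α f a N t
      = ((f t - t ^ (-α) * ∑ k ∈ Finset.range N, a k * t ^ k : ℝ) : ℂ) := by
  rw [melF, Finset.sum_congr rfl (fun k _ => by rw [melE_eq α k ht])]
  push_cast
  rw [Finset.mul_sum]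
  congr 1
  exact Finset.sum_congr rfl fun k _ => by ring

lemma melF_bot {α : ℝ} {f : ℝ → ℝ} {a : ℕ → ℝ} {N : ℕ}
    (h : ∃ C : ℝ, ∀ t ∈ Set.Ioc (0:ℝ) 1,
      |f t - t ^ (-α) * ∑ k ∈ Finset.range N, a k * t ^ k| ≤ C * t ^ ((N:ℝ) - α)) :
    melF α f a N =O[nhdsWithin 0 (Set.Ioi 0)] (fun t : ℝ => t ^ (-(α - (N:ℝ)))) := by
  obtain ⟨C, hC⟩ := h
  rw [Asymptotics.isBigO_iff]
  refine ⟨C, ?_⟩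
  filter_upwards [Ioc_mem_nhdsGT_of_mem (Set.mem_Ico.mpr ⟨le_refl 0, zero_lt_one⟩)] with t ht
  rw [melF_eq ht, neg_sub, Complex.norm_real, Real.norm_eq_abs, Real.norm_eq_abs,
    abs_of_pos (Real.rpow_pos_of_pos ht.1 _)]
  exact hC t ht

lemma melF_top {α : ℝ} {f : ℝ → ℝ} {a : ℕ → ℝ} {N : ℕ} {c C : ℝ}
    (hC : ∀ t ≥ (1:ℝ), |f t| ≤ C * Real.exp (-c * t)) :
    melF α f a N =O[atTop] (fun t : ℝ => Real.exp (-c * t)) := by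
  rw [Asymptotics.isBigO_iff]
  refine ⟨C, ?_⟩
  filter_upwards [eventually_gt_atTop (1:ℝ)] with t ht
  have h0 : melF α f a N t = (f t : ℂ) := by
    rw [melF, Finset.sum_eq_zero, sub_zero]
    intro k _
    rw [melE, Set.indicator_of_notMem (fun hmem => (not_le.2 ht) hmem.2), mul_zero]
  rw [h0, Complex.norm_real, Real.norm_eq_abs, Real.norm_eq_abs,
    abs_of_pos (Real.exp_pos _)]
  exact hC t ht.le

lemma melF_locInt {α : ℝ} {f : ℝ → ℝ} (a : ℕ → ℝ) (N : ℕ)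
    (hf : ContinuousOn f (Set.Ioi 0)) :
    LocallyIntegrableOn (melF α f a N) (Set.Ioi 0) := by
  rw [locallyIntegrableOn_iff isOpen_Ioi.isLocallyClosed]
  intro K hK hKc
  rcases K.eq_empty_or_nonempty with rfl | hne
  · simp
  have hε : (0:ℝ) < sInf K := hK (hKc.sInf_mem hne)
  have hKI : K ⊆ Set.Ici (sInf K) := fun x hx => csInf_le hKc.bddBelow hx
  have h1 : IntegrableOn (fun t => ((f t : ℝ) : ℂ)) K :=
    (Complex.continuous_ofReal.comp_continuousOn (hf.mono hK)).integrableOn_compact hKc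
  have h2 : IntegrableOn (fun t => ∑ k ∈ Finset.range N, (a k : ℂ) * melE α k t) K := by
    apply integrable_finset_sum
    intro k _
    apply Integrable.const_mul
    have hcont : ContinuousOn (fun t : ℝ => (t:ℂ) ^ ((k:ℂ) - (α:ℂ))) (Set.Icc (sInf K) 1) :=
      fun x hx => (Complex.continuousAt_ofReal_cpow_const x _
        (Or.inr (ne_of_gt (lt_of_lt_of_le hε hx.1)))).continuousWithinAt
    have hint : IntegrableOn (fun t : ℝ => (t:ℂ) ^ ((k:ℂ) - (α:ℂ))) (Set.Ioc 0 1 ∩ K) :=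
      (hcont.integrableOn_compact isCompact_Icc).mono_set
        (fun x hx => ⟨hKI hx.2, hx.1.2⟩)
    simp only [melE]
    rw [integrable_indicator_iff measurableSet_Ioc]
    unfold IntegrableOn
    rw [Measure.restrict_restrict measurableSet_Ioc]
    exact hint
  exact h1.sub h2

lemma melF_conv {α : ℝ} {f : ℝ → ℝ} {a : ℕ → ℝ} {N : ℕ} {s : ℂ}
    (hf : ContinuousOn f (Set.Ioi 0))
    (hdecay : ∃ c > (0 : ℝ), ∃ C : ℝ, ∀ t ≥ (1 : ℝ), |f t| ≤ C * Real.exp (-c * t))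
    (hasymp : ∃ C : ℝ, ∀ t ∈ Set.Ioc (0:ℝ) 1,
      |f t - t ^ (-α) * ∑ k ∈ Finset.range N, a k * t ^ k| ≤ C * t ^ ((N:ℝ) - α))
    (hs : α - N < s.re) :
    MellinConvergent (melF α f a N) s := by
  obtain ⟨c, hc, C, hC⟩ := hdecay
  exact mellinConvergent_of_isBigO_rpow_exp hc (melF_locInt a N hf)
    (melF_top hC) (melF_bot hasymp) hs

lemma melF_diff {α : ℝ} {f : ℝ → ℝ} {a : ℕ → ℝ} {N : ℕ} {s : ℂ}
    (hf : ContinuousOn f (Set.Ioi 0))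
    (hdecay : ∃ c > (0 : ℝ), ∃ C : ℝ, ∀ t ≥ (1 : ℝ), |f t| ≤ C * Real.exp (-c * t))
    (hasymp : ∃ C : ℝ, ∀ t ∈ Set.Ioc (0:ℝ) 1,
      |f t - t ^ (-α) * ∑ k ∈ Finset.range N, a k * t ^ k| ≤ C * t ^ ((N:ℝ) - α))
    (hs : α - N < s.re) :
    DifferentiableAt ℂ (mellin (melF α f a N)) s := by
  obtain ⟨c, hc, C, hC⟩ := hdecay
  exact mellin_differentiableAt_of_isBigO_rpow_exp hc (melF_locInt a N hf)
    (melF_top hC) (melF_bot hasymp) hs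

lemma melF_step {α : ℝ} {f : ℝ → ℝ} {a : ℕ → ℝ} {N : ℕ} {s : ℂ}
    (hf : ContinuousOn f (Set.Ioi 0))
    (hdecay : ∃ c > (0 : ℝ), ∃ C : ℝ, ∀ t ≥ (1 : ℝ), |f t| ≤ C * Real.exp (-c * t))
    (hasymp : ∃ C : ℝ, ∀ t ∈ Set.Ioc (0:ℝ) 1,
      |f t - t ^ (-α) * ∑ k ∈ Finset.range N, a k * t ^ k| ≤ C * t ^ ((N:ℝ) - α))
    (hs : α - N < s.re) :
    mellin (melF α f a (N+1)) s
      = mellin (melF α f a N) s - (a N : ℂ) * (s - ((α:ℂ) - (N:ℂ)))⁻¹ := by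
  have hre : 0 < s.re + ((N:ℂ) - (α:ℂ)).re := by
    simp only [Complex.sub_re, Complex.natCast_re, Complex.ofReal_re]
    linarith
  have hE := hasMellin_cpow_Ioc ((N:ℂ) - (α:ℂ)) hre
  have hconvE : MellinConvergent (fun t => (a N : ℂ) * melE α N t) s := by
    have := hE.1.const_smul ((a N : ℂ))
    simpa only [smul_eq_mul, melE] using this
  have hconvF : MellinConvergent (melF α f a N) s := melF_conv hf hdecay hasymp hs
  have heq : melF α f a (N+1) = fun t => melF α f a N t - (a N : ℂ) * melE α N t := by
    funext t
    rw [melF, melF, Finset.sum_range_succ]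
    ring
  rw [heq, (hasMellin_sub hconvF hconvE).2]
  congr 1
  have hsm : mellin (fun t => (a N : ℂ) • melE α N t) s = (a N : ℂ) • mellin (melE α N) s :=
    mellin_const_smul _ _ _
  simp only [smul_eq_mul] at hsm
  rw [hsm, show mellin (melE α N) s = 1 / (s + ((N:ℂ) - (α:ℂ))) from hE.2]
  rw [show s + ((N:ℂ) - (α:ℂ)) = s - ((α:ℂ) - (N:ℂ)) by ring, one_div]

lemma melPsi_step {α : ℝ} {f : ℝ → ℝ} {a : ℕ → ℝ} {N : ℕ} {s : ℂ}
    (hf : ContinuousOn f (Set.Ioi 0))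
    (hdecay : ∃ c > (0 : ℝ), ∃ C : ℝ, ∀ t ≥ (1 : ℝ), |f t| ≤ C * Real.exp (-c * t))
    (hasymp : ∃ C : ℝ, ∀ t ∈ Set.Ioc (0:ℝ) 1,
      |f t - t ^ (-α) * ∑ k ∈ Finset.range N, a k * t ^ k| ≤ C * t ^ ((N:ℝ) - α))
    (hs : α - N < s.re) :
    melPsi α f a (N+1) s = melPsi α f a N s := by
  have hne : s ≠ (α:ℂ) - (N:ℂ) := by
    intro h
    rw [h] at hs
    simp only [Complex.sub_re, Complex.natCast_re, Complex.ofReal_re] at hs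
    linarith
  rw [melPsi, melPsi, Finset.sum_range_succ, melF_step hf hdecay hasymp hs, melW,
    dslope_of_ne _ hne, slope_def_field, div_eq_mul_inv]
  ring

lemma melPsi_ge {α : ℝ} {f : ℝ → ℝ} {a : ℕ → ℝ}
    (hf : ContinuousOn f (Set.Ioi 0))
    (hdecay : ∃ c > (0 : ℝ), ∃ C : ℝ, ∀ t ≥ (1 : ℝ), |f t| ≤ C * Real.exp (-c * t))
    (hasymp : ∀ N : ℕ, ∃ C : ℝ, ∀ t ∈ Set.Ioc (0:ℝ) 1,
      |f t - t ^ (-α) * ∑ k ∈ Finset.range N, a k * t ^ k| ≤ C * t ^ ((N:ℝ) - α))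
    {M N : ℕ} {s : ℂ} (hMN : M ≤ N) (hs : α - M < s.re) :
    melPsi α f a N s = melPsi α f a M s := by
  induction N, hMN using Nat.le_induction with
  | base => rfl
  | succ n hn ih =>
    have hn' : α - n < s.re := by
      have : (M:ℝ) ≤ n := Nat.cast_le.2 hn
      linarith
    rw [melPsi_step hf hdecay (hasymp n) hn', ih]

lemma gammaInv_analytic : ∀ z : ℂ, AnalyticAt ℂ (fun w => (Complex.Gamma w)⁻¹) z :=
  fun z => Complex.differentiable_one_div_Gamma.analyticAt z

lemma analyticAt_dslope_gammaInv (p z : ℂ) :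
    AnalyticAt ℂ (dslope (fun w => (Complex.Gamma w)⁻¹) p) z := by
  rcases eq_or_ne z p with rfl | hz
  · obtain ⟨q, hq⟩ := gammaInv_analytic z
    exact ⟨q.fslope, hq.has_fpower_series_dslope_fslope⟩
  · have hev : (fun w => (w - p)⁻¹ * ((Complex.Gamma w)⁻¹ - (Complex.Gamma p)⁻¹))
        =ᶠ[nhds z] dslope (fun w => (Complex.Gamma w)⁻¹) p := by
      filter_upwards [eventually_ne_nhds hz] with w hw
      rw [dslope_of_ne _ hw, slope_def_field, div_eq_mul_inv]
      ring
    exact (((analyticAt_id.sub analyticAt_const).inv (sub_ne_zero.2 hz)).mul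
      ((gammaInv_analytic z).sub analyticAt_const)).congr hev

lemma melW_analyticAt {α : ℝ} {a : ℕ → ℝ} {k : ℕ} {s₀ : ℂ}
    (h : s₀ ≠ (α:ℂ) - (k:ℂ)) : AnalyticAt ℂ (melW α a k) s₀ :=
  analyticAt_const.mul ((analyticAt_dslope_gammaInv _ _).add
    (analyticAt_const.mul ((analyticAt_id.sub analyticAt_const).inv (sub_ne_zero.2 h))))

lemma mellin_melF_analytic {α : ℝ} {f : ℝ → ℝ} {a : ℕ → ℝ} {M : ℕ} {s₀ : ℂ}
    (hf : ContinuousOn f (Set.Ioi 0))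
    (hdecay : ∃ c > (0 : ℝ), ∃ C : ℝ, ∀ t ≥ (1 : ℝ), |f t| ≤ C * Real.exp (-c * t))
    (hasymp : ∃ C : ℝ, ∀ t ∈ Set.Ioc (0:ℝ) 1,
      |f t - t ^ (-α) * ∑ k ∈ Finset.range M, a k * t ^ k| ≤ C * t ^ ((M:ℝ) - α))
    (hs : α - M < s₀.re) :
    AnalyticAt ℂ (mellin (melF α f a M)) s₀ := by
  have hU : IsOpen {s : ℂ | α - M < s.re} := isOpen_lt continuous_const Complex.continuous_re
  exact DifferentiableOn.analyticAt
    (fun s hs' => (melF_diff hf hdecay hasymp hs').differentiableWithinAt)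
    (hU.mem_nhds hs)

/-- Meromorphic continuation of the Mellin transform: let `f : (0,∞) → ℝ` be
continuous, exponentially decaying at `∞`, with an asymptotic expansion
`f(t) ~ t^{-(d-1)/2} Σ_k a_k t^k` as `t → 0⁺`. Then
`ζ(s) = Γ(s)⁻¹ ∫₀^∞ t^{s-1} f(t) dt`, absolutely convergent for `Re s > (d-1)/2`,
extends to a meromorphic function `Z` on ℂ, analytic away from the points
`(d-1)/2 - k` (`k ∈ ℕ`), with at most a simple pole at `(d-1)/2 - k` of residue
`a_k / Γ((d-1)/2 - k)` (interpreted as `0`, i.e. no pole, when `(d-1)/2 - k` is a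
non-positive integer, since `Γ⁻¹` vanishes there). -/
theorem mellin_transform_meromorphic_continuation
    (d : ℕ) (hd : 2 ≤ d) (f : ℝ → ℝ) (hf : ContinuousOn f (Set.Ioi 0))
    (hdecay : ∃ c > (0 : ℝ), ∃ C : ℝ, ∀ t ≥ (1 : ℝ), |f t| ≤ C * Real.exp (-c * t))
    (a : ℕ → ℝ)
    (hasymp : ∀ N : ℕ, ∃ C : ℝ, ∀ t ∈ Set.Ioc (0 : ℝ) 1,
      |f t - t ^ (-(((d : ℝ) - 1) / 2)) * ∑ k ∈ Finset.range N, a k * t ^ k|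
        ≤ C * t ^ ((N : ℝ) - ((d : ℝ) - 1) / 2)) :
    ∃ Z : ℂ → ℂ,
      (∀ s : ℂ, ((d : ℝ) - 1) / 2 < s.re →
        IntegrableOn (fun t : ℝ => (t : ℂ) ^ (s - 1) * (f t : ℂ)) (Set.Ioi 0) ∧
        Z s = (Complex.Gamma s)⁻¹
          * ∫ t in Set.Ioi (0 : ℝ), (t : ℂ) ^ (s - 1) * (f t : ℂ)) ∧
      (∀ s₀ : ℂ, (∀ k : ℕ, s₀ ≠ ((d : ℂ) - 1) / 2 - k) → AnalyticAt ℂ Z s₀) ∧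
      (∀ k : ℕ, AnalyticAt ℂ
        (fun s => Z s - (a k : ℂ) * (Complex.Gamma (((d : ℂ) - 1) / 2 - k))⁻¹
            / (s - (((d : ℂ) - 1) / 2 - k)))
        (((d : ℂ) - 1) / 2 - k)) := by
  set α : ℝ := ((d : ℝ) - 1) / 2 with hα
  have hcast : ∀ k : ℕ, ((d:ℂ) - 1)/2 - (k:ℂ) = (α : ℂ) - (k:ℂ) := by
    intro k
    rw [hα]
    push_cast
    ring
  set Z : ℂ → ℂ := fun s => melPsi α f a (⌈α - s.re⌉₊ + 1) s with hZ
  have hNfun : ∀ s : ℂ, α - ((⌈α - s.re⌉₊ + 1 : ℕ) : ℝ) < s.re := by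
    intro s
    have h1 : α - s.re ≤ (⌈α - s.re⌉₊ : ℝ) := Nat.le_ceil _
    push_cast
    linarith
  have hZrep : ∀ (M : ℕ) (s : ℂ), α - M < s.re → Z s = melPsi α f a M s := by
    intro M s hs
    have h1 := melPsi_ge hf hdecay hasymp (le_max_right M (⌈α - s.re⌉₊ + 1)) (hNfun s)
    have h2 := melPsi_ge hf hdecay hasymp (le_max_left M (⌈α - s.re⌉₊ + 1)) hs
    rw [hZ]
    dsimp only
    rw [← h1, h2]
  refine ⟨Z, ?_, ?_, ?_⟩
  · intro s hs
    have hs' : α - ((0:ℕ):ℝ) < s.re := by simpa using hs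
    have hF0 : melF α f a 0 = fun t => ((f t : ℝ) : ℂ) := by
      funext t
      simp [melF]
    have hconv := melF_conv (N := 0) hf hdecay (hasymp 0) hs'
    rw [hF0] at hconv
    constructor
    · simpa only [MellinConvergent, smul_eq_mul] using hconv
    · rw [hZrep 0 s hs', melPsi, hF0]
      simp only [Finset.range_zero, Finset.sum_empty, add_zero, mellin, smul_eq_mul]
  · intro s₀ h
    have hsM := hNfun s₀
    set M := ⌈α - s₀.re⌉₊ + 1 with hM
    have hU : IsOpen {s : ℂ | α - M < s.re} := isOpen_lt continuous_const Complex.continuous_re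
    have hev : melPsi α f a M =ᶠ[nhds s₀] Z :=
      Filter.eventually_of_mem (hU.mem_nhds hsM) (fun s hs => (hZrep M s hs).symm)
    refine AnalyticAt.congr ?_ hev
    have h1 : AnalyticAt ℂ (fun s => (Complex.Gamma s)⁻¹ * mellin (melF α f a M) s) s₀ :=
      (gammaInv_analytic s₀).mul (mellin_melF_analytic hf hdecay (hasymp M) hsM)
    have h2 : AnalyticAt ℂ (fun s => ∑ k ∈ Finset.range M, melW α a k s) s₀ :=
      Finset.analyticAt_fun_sum _ (fun k _ => melW_analyticAt (by rw [← hcast k]; exact h k))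
    exact h1.add h2
  · intro k
    rw [hcast k]
    set p : ℂ := (α:ℂ) - (k:ℂ) with hp
    have hpre : p.re = α - k := by
      simp [hp, Complex.sub_re]
    have hsM : α - ((k+1 : ℕ):ℝ) < p.re := by
      rw [hpre]
      push_cast
      linarith
    have hU : IsOpen {s : ℂ | α - ((k+1:ℕ):ℝ) < s.re} :=
      isOpen_lt continuous_const Complex.continuous_re
    have hev : (fun s => melPsi α f a (k+1) s - (a k : ℂ) * (Complex.Gamma p)⁻¹ / (s - p))
        =ᶠ[nhds p] (fun s => Z s - (a k : ℂ) * (Complex.Gamma p)⁻¹ / (s - p)) := by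
      filter_upwards [hU.mem_nhds hsM] with s hs
      rw [hZrep (k+1) s hs]
    refine AnalyticAt.congr ?_ hev
    have hg : (fun s => melPsi α f a (k+1) s - (a k : ℂ) * (Complex.Gamma p)⁻¹ / (s - p))
        = fun s => ((Complex.Gamma s)⁻¹ * mellin (melF α f a (k+1)) s
            + ∑ j ∈ Finset.range k, melW α a j s)
          + (a k : ℂ) * dslope (fun w => (Complex.Gamma w)⁻¹) p s := by
      funext s
      rw [melPsi, Finset.sum_range_succ, melW, div_eq_mul_inv, hp]
      ring
    rw [hg]
    have h1 : AnalyticAt ℂ (fun s => (Complex.Gamma s)⁻¹ * mellin (melF α f a (k+1)) s) p :=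
      (gammaInv_analytic p).mul (mellin_melF_analytic hf hdecay (hasymp (k+1)) hsM)
    have h2 : AnalyticAt ℂ (fun s => ∑ j ∈ Finset.range k, melW α a j s) p :=
      Finset.analyticAt_fun_sum _ (fun j hj => melW_analyticAt (by
        intro hh
        rw [hp] at hh
        have hkj : (k:ℂ) = (j:ℂ) := sub_right_injective hh
        exact (Finset.mem_range.1 hj).ne (by exact_mod_cast hkj.symm)))
    exact (h1.add h2).add (analyticAt_const.mul (analyticAt_dslope_gammaInv p p))
end
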